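/- Let V be a finite type and E a DAG on V. Let X = {X₁, …, X_k} (k ≥ 1, distinct), {Y}, and W be pairwise disjoint vertex sets with causal ordering W < X < {Y}, and for each i let X_iᴺ = X \ De(X_i) be the vertices of X that are not descendants of X_i. Suppose there exist W₁, …, W_k ∈ W and sets T_i ⊆ (W \ {W₁, …, W_k}) ∪ X_iᴺ such that for every i: (i) W_i and Y are d-connected given T_i, and (ii) W_i and Y are d-separated given T_i ∪ {X_i}. Suppose further that for each i, Z_i ⊆ T_i is a set satisfying the adjustment criterion relative to ({X_i}, {Y}) such that no proper subset of Z_i satisfies the adjustment criterion relative to ({X_i}, {Y}). Then for every i there is a directed path from X_i to Y with at least one edge, and the set Z := (⋃_{i=1}^k Z_i) \ X satisfies the back-door criterion relative to (X, {Y}). -/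

import Mathlib

open scoped Classical

variable {V : Type*}

/-- `a` is an ancestor of `b` (every vertex is its own ancestor). -/
def Anc (E : V → V → Prop) (a b : V) : Prop := Relation.ReflTransGen E a b

/-- A path in a directed graph `E` from `a` to `b`: a sequence of distinct vertices
`a = vtx 0, …, vtx len = b` (`len ≥ 1`) in which consecutive vertices are joined
by an edge of `E` in either direction. -/
structure GPath (E : V → V → Prop) (a b : V) where
  len : ℕ
  len_pos : 0 < len
  vtx : ℕ → V
  first : vtx 0 = a
  last : vtx len = b
  inj : ∀ i j, i ≤ len → j ≤ len → vtx i = vtx j → i = j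
  adj : ∀ i, i < len → E (vtx i) (vtx (i + 1)) ∨ E (vtx (i + 1)) (vtx i)

namespace GPath

variable {E : V → V → Prop} {a b : V}

/-- The interior vertex at position `i` is a collider on the path. -/
def IsColliderAt (p : GPath E a b) (i : ℕ) : Prop :=
  0 < i ∧ i < p.len ∧ E (p.vtx (i - 1)) (p.vtx i) ∧ E (p.vtx (i + 1)) (p.vtx i)

/-- A path is open given `S` if no non-collider on it lies in `S` and every collider
on it has a descendant in `S`. -/
def OpenGiven (p : GPath E a b) (S : Set V) : Prop :=
  (∀ i, 0 < i → i < p.len → ¬ p.IsColliderAt i → p.vtx i ∉ S) ∧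
  (∀ i, p.IsColliderAt i → ∃ d ∈ S, Anc E (p.vtx i) d)

/-- A back-door path: the first edge points into the first vertex. -/
def IsBackdoor (p : GPath E a b) : Prop := E (p.vtx 1) (p.vtx 0)

/-- A causal (directed) path. -/
def Causal (p : GPath E a b) : Prop := ∀ i, i < p.len → E (p.vtx i) (p.vtx (i + 1))

/-- A path is proper with respect to `X` if only its first vertex lies in `X`. -/
def ProperFrom (p : GPath E a b) (X : Set V) : Prop :=
  ∀ i, 0 < i → i ≤ p.len → p.vtx i ∉ X

/-- The vertex `w` lies on the path. -/
def MemV (p : GPath E a b) (w : V) : Prop := ∃ i ≤ p.len, p.vtx i = w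

/-- The number of colliders on the path. -/
noncomputable def numColliders (p : GPath E a b) : ℕ := Set.ncard {i | p.IsColliderAt i}

end GPath

/-- `A` and `B` are d-separated given `S`: every path from `A` to `B` is blocked given `S`. -/
def DSep (E : V → V → Prop) (A B S : Set V) : Prop :=
  ∀ a ∈ A, ∀ b ∈ B, ∀ p : GPath E a b, ¬ p.OpenGiven S

/-- `A` and `B` are d-connected given `S`: some path from `A` to `B` is open given `S`. -/
def DConn (E : V → V → Prop) (A B S : Set V) : Prop :=
  ∃ a ∈ A, ∃ b ∈ B, ∃ p : GPath E a b, p.OpenGiven S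

/-- The set of descendants of a vertex set `S`. -/
def descendants (E : V → V → Prop) (S : Set V) : Set V := {d | ∃ s ∈ S, Anc E s d}

/-- `S` blocks every back-door path from `x` to `y`. -/
def BlocksBackdoor (E : V → V → Prop) (x y : V) (S : Set V) : Prop :=
  ∀ p : GPath E x y, p.IsBackdoor → ¬ p.OpenGiven S

/-- The back-door criterion for `Z` relative to `(X, Y)`. -/
def BackdoorCriterion (E : V → V → Prop) (X Y Z : Set V) : Prop :=
  Z ∩ descendants E X = ∅ ∧
  ∀ x ∈ X, ∀ y ∈ Y, BlocksBackdoor E x y (Z ∪ (X \ {x}))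

/-- The adjustment criterion for `Z` relative to `(X, Y)`: (a) `Z` contains no
descendant of any `w ∉ X` lying on a proper causal path from `X` to `Y`, and
(b) `Z` blocks every proper non-causal path from `X` to `Y`. -/
def AdjustmentCriterion (E : V → V → Prop) (X Y Z : Set V) : Prop :=
  (∀ w, w ∉ X →
      (∃ x ∈ X, ∃ y ∈ Y, ∃ p : GPath E x y, p.ProperFrom X ∧ p.Causal ∧ p.MemV w) →
      ∀ z ∈ Z, ¬ Anc E w z) ∧
  (∀ x ∈ X, ∀ y ∈ Y, ∀ p : GPath E x y, p.ProperFrom X → ¬ p.Causal → ¬ p.OpenGiven Z)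


section Aux
variable {E : V → V → Prop} {a b : V} {S : Set V}

lemma no2cyc (hdag : Irreflexive (Relation.TransGen E)) {u v : V}
    (h1 : E u v) (h2 : E v u) : False :=
  hdag u (Relation.TransGen.head h1 (Relation.TransGen.single h2))

lemma sweep_forward (p : GPath E a b)
    (hS : ∀ i, p.IsColliderAt i → ∃ d ∈ S, Anc E (p.vtx i) d) :
    ∀ n j, p.len - j ≤ n → j < p.len → E (p.vtx j) (p.vtx (j + 1)) →
      Relation.TransGen E (p.vtx j) b ∨ ∃ s ∈ S, Relation.TransGen E (p.vtx j) s := by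
  intro n
  induction n with
  | zero => intro j h hj _; omega
  | succ n ih =>
    intro j h hj he
    rcases eq_or_lt_of_le (Nat.succ_le_of_lt hj) with heq | hlt
    · left
      have hb : p.vtx (j + 1) = b := by
        have := p.last; rw [← heq] at this; exact this
      have h2 := Relation.TransGen.single he
      rwa [hb] at h2
    · -- j + 1 < p.len
      rcases p.adj (j + 1) hlt with he2 | he2
      · rcases ih (j + 1) (by omega) hlt he2 with h1 | ⟨s, hs, h1⟩
        · exact Or.inl (Relation.TransGen.head he h1)
        · exact Or.inr ⟨s, hs, Relation.TransGen.head he h1⟩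
      · have hcol : p.IsColliderAt (j + 1) := by
          refine ⟨by omega, hlt, ?_, he2⟩
          simpa using he
        rcases hS _ hcol with ⟨d, hd, hanc⟩
        exact Or.inr ⟨d, hd, Relation.TransGen.trans_left (Relation.TransGen.single he) hanc⟩

end Aux

section Aux2
variable {E : V → V → Prop} {a b : V} {S : Set V}

lemma sweep_backward (p : GPath E a b)
    (hS : ∀ i, p.IsColliderAt i → ∃ d ∈ S, Anc E (p.vtx i) d) :
    ∀ j, j < p.len → E (p.vtx (j + 1)) (p.vtx j) →
      Relation.TransGen E (p.vtx (j + 1)) a ∨ ∃ s ∈ S, Relation.TransGen E (p.vtx (j + 1)) s := by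
  intro j
  induction j using Nat.strong_induction_on with
  | _ j ih =>
    intro hj he
    rcases Nat.eq_zero_or_pos j with rfl | hpos
    · left
      have h2 := Relation.TransGen.single he
      rwa [p.first] at h2
    · have hj1 : j - 1 + 1 = j := by omega
      rcases p.adj (j - 1) (by omega) with he2 | he2
      · rw [hj1] at he2
        have hcol : p.IsColliderAt j := ⟨hpos, hj, he2, he⟩
        rcases hS _ hcol with ⟨d, hd, hanc⟩
        exact Or.inr ⟨d, hd, Relation.TransGen.trans_left (Relation.TransGen.single he) hanc⟩
      · rw [hj1] at he2
        have := ih (j - 1) (by omega) (by omega) (by rw [hj1]; exact he2)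
        rw [hj1] at this
        rcases this with h1 | ⟨s, hs, h1⟩
        · exact Or.inl (Relation.TransGen.head he h1)
        · exact Or.inr ⟨s, hs, Relation.TransGen.head he h1⟩

/-- Every vertex on a path whose colliders all have descendants in `S` is an
ancestor of an endpoint or of `S`. -/
lemma vertex_anc (p : GPath E a b)
    (hS : ∀ i, p.IsColliderAt i → ∃ d ∈ S, Anc E (p.vtx i) d) :
    ∀ j, j ≤ p.len →
      Anc E (p.vtx j) a ∨ Anc E (p.vtx j) b ∨ ∃ s ∈ S, Anc E (p.vtx j) s := by
  intro j hj
  rcases Nat.eq_zero_or_pos j with rfl | hpos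
  · exact Or.inl (by rw [p.first]; exact Relation.ReflTransGen.refl)
  rcases eq_or_lt_of_le hj with rfl | hlt
  · exact Or.inr (Or.inl (by rw [p.last]; exact Relation.ReflTransGen.refl))
  by_cases hcol : p.IsColliderAt j
  · rcases hS _ hcol with ⟨d, hd, hanc⟩
    exact Or.inr (Or.inr ⟨d, hd, hanc⟩)
  · have hj1 : j - 1 + 1 = j := by omega
    rcases p.adj j hlt with he | he
    · rcases sweep_forward p hS (p.len - j) j le_rfl hlt he with h1 | ⟨s, hs, h1⟩
      · exact Or.inr (Or.inl h1.to_reflTransGen)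
      · exact Or.inr (Or.inr ⟨s, hs, h1.to_reflTransGen⟩)
    · rcases p.adj (j - 1) (by omega) with he2 | he2
      · rw [hj1] at he2
        exact absurd ⟨hpos, hlt, he2, he⟩ hcol
      · rw [hj1] at he2
        have := sweep_backward p hS (j - 1) (by omega) (by rw [hj1]; exact he2)
        rw [hj1] at this
        rcases this with h1 | ⟨s, hs, h1⟩
        · exact Or.inl h1.to_reflTransGen
        · exact Or.inr (Or.inr ⟨s, hs, h1.to_reflTransGen⟩)

/-- A reflexive-transitive chain yields an explicit directed chain. -/
lemma anc_chain {x y : V} (h : Anc E x y) :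
    ∃ r, ∃ u : ℕ → V, u 0 = x ∧ u r = y ∧ ∀ i, i < r → E (u i) (u (i + 1)) := by
  induction h with
  | refl => exact ⟨0, fun _ => x, rfl, rfl, by omega⟩
  | @tail w c _ hbc ih =>
    rcases ih with ⟨r, u, h0, hr, hstep⟩
    refine ⟨r + 1, fun i => if i ≤ r then u i else c, ?_, ?_, ?_⟩
    · simpa using h0
    · simp
    · intro i hi
      rcases Nat.lt_or_ge i r with h | h
      · simpa [Nat.le_of_lt h, Nat.succ_le_of_lt h] using hstep i h
      · have : i = r := by omega
        subst this
        simp only [le_refl, if_pos, Nat.lt_irrefl]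
        rw [if_neg (by omega), hr]
        exact hbc

lemma chain_anc {r : ℕ} {u : ℕ → V} (hstep : ∀ i, i < r → E (u i) (u (i + 1))) :
    ∀ k, k ≤ r → Anc E (u 0) (u k) := by
  intro k
  induction k with
  | zero => intro; exact Relation.ReflTransGen.refl
  | succ k ih => intro hk; exact (ih (by omega)).tail (hstep k (by omega))

end Aux2

/-- A walk: like a path but vertices may repeat. -/
structure GWalk (E : V → V → Prop) (a b : V) where
  len : ℕ
  len_pos : 0 < len
  vtx : ℕ → V
  first : vtx 0 = a
  last : vtx len = b
  adj : ∀ i, i < len → E (vtx i) (vtx (i + 1)) ∨ E (vtx (i + 1)) (vtx i)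

namespace GWalk

variable {E : V → V → Prop} {a b c b' a' : V}

def Col (w : GWalk E a b) (i : ℕ) : Prop :=
  0 < i ∧ i < w.len ∧ E (w.vtx (i - 1)) (w.vtx i) ∧ E (w.vtx (i + 1)) (w.vtx i)

def copyTarget (w : GWalk E a b) (h : b = b') : GWalk E a b' :=
  { w with last := h ▸ w.last }

@[simp] lemma copyTarget_vtx (w : GWalk E a b) (h : b = b') (i : ℕ) :
    (w.copyTarget h).vtx i = w.vtx i := rfl

@[simp] lemma copyTarget_len (w : GWalk E a b) (h : b = b') :
    (w.copyTarget h).len = w.len := rfl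

lemma copyTarget_col (w : GWalk E a b) (h : b = b') (i : ℕ) :
    (w.copyTarget h).Col i ↔ w.Col i := Iff.rfl

def copySource (w : GWalk E a b) (h : a = a') : GWalk E a' b :=
  { w with first := h ▸ w.first }

@[simp] lemma copySource_vtx (w : GWalk E a b) (h : a = a') (i : ℕ) :
    (w.copySource h).vtx i = w.vtx i := rfl

@[simp] lemma copySource_len (w : GWalk E a b) (h : a = a') :
    (w.copySource h).len = w.len := rfl

lemma copySource_col (w : GWalk E a b) (h : a = a') (i : ℕ) :
    (w.copySource h).Col i ↔ w.Col i := Iff.rfl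

def append (w1 : GWalk E a c) (w2 : GWalk E c b) : GWalk E a b where
  len := w1.len + w2.len
  len_pos := by have := w1.len_pos; omega
  vtx i := if i ≤ w1.len then w1.vtx i else w2.vtx (i - w1.len)
  first := by simp [w1.first]
  last := by
    have h2 := w2.len_pos
    rw [if_neg (by omega)]
    have : w1.len + w2.len - w1.len = w2.len := by omega
    rw [this, w2.last]
  adj i hi := by
    rcases Nat.lt_trichotomy i w1.len with h | h | h
    · rw [if_pos (by omega), if_pos (by omega)]
      exact w1.adj i h
    · subst h
      rw [if_pos le_rfl, if_neg (by omega), w1.last]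
      have h1 : w1.len + 1 - w1.len = 1 := by omega
      rw [h1]
      have h2 := w2.adj 0 w2.len_pos
      rw [w2.first] at h2
      simpa using h2
    · rw [if_neg (by omega), if_neg (by omega)]
      have : i + 1 - w1.len = i - w1.len + 1 := by omega
      rw [this]
      exact w2.adj (i - w1.len) (by omega)

lemma append_len (w1 : GWalk E a c) (w2 : GWalk E c b) :
    (w1.append w2).len = w1.len + w2.len := rfl

lemma append_vtx_le (w1 : GWalk E a c) (w2 : GWalk E c b) {i : ℕ} (h : i ≤ w1.len) :
    (w1.append w2).vtx i = w1.vtx i := by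
  show (if i ≤ w1.len then _ else _) = _
  rw [if_pos h]

lemma append_vtx_ge (w1 : GWalk E a c) (w2 : GWalk E c b) {i : ℕ} (h : w1.len ≤ i) :
    (w1.append w2).vtx i = w2.vtx (i - w1.len) := by
  show (if i ≤ w1.len then _ else _) = _
  rcases eq_or_lt_of_le h with rfl | h'
  · rw [if_pos le_rfl, w1.last]
    simp [w2.first]
  · rw [if_neg (by omega)]

lemma append_col_left (w1 : GWalk E a c) (w2 : GWalk E c b) {i : ℕ}
    (h0 : 0 < i) (h : i < w1.len) : (w1.append w2).Col i ↔ w1.Col i := by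
  unfold Col
  rw [append_len, append_vtx_le _ _ (by omega), append_vtx_le _ _ (by omega),
    append_vtx_le _ _ (by omega)]
  have := w2.len_pos
  constructor
  · rintro ⟨a1, a2, a3, a4⟩; exact ⟨a1, h, a3, a4⟩
  · rintro ⟨a1, a2, a3, a4⟩; exact ⟨a1, by omega, a3, a4⟩

lemma append_col_right (w1 : GWalk E a c) (w2 : GWalk E c b) {i : ℕ}
    (h0 : w1.len < i) (h : i < w1.len + w2.len) :
    (w1.append w2).Col i ↔ w2.Col (i - w1.len) := by
  unfold Col
  rw [append_len, append_vtx_ge _ _ (by omega), append_vtx_ge _ _ (by omega),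
    append_vtx_ge _ _ (by omega)]
  have e1 : i - 1 - w1.len = i - w1.len - 1 := by omega
  have e2 : i + 1 - w1.len = i - w1.len + 1 := by omega
  rw [e1, e2]
  constructor
  · rintro ⟨a1, a2, a3, a4⟩; exact ⟨by omega, by omega, a3, a4⟩
  · rintro ⟨a1, a2, a3, a4⟩; exact ⟨by omega, by omega, a3, a4⟩

lemma append_col_junction (w1 : GWalk E a c) (w2 : GWalk E c b) :
    (w1.append w2).Col w1.len ↔
      E (w1.vtx (w1.len - 1)) c ∧ E (w2.vtx 1) c := by
  have h1 := w1.len_pos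
  have h2 := w2.len_pos
  unfold Col
  rw [append_len, append_vtx_le _ _ (by omega), append_vtx_le _ _ le_rfl,
    append_vtx_ge _ _ (by omega), w1.last]
  have : w1.len + 1 - w1.len = 1 := by omega
  rw [this]
  constructor
  · rintro ⟨_, _, a3, a4⟩; exact ⟨a3, a4⟩
  · rintro ⟨a3, a4⟩; exact ⟨h1, by omega, a3, a4⟩

def take (w : GWalk E a b) (s : ℕ) (h0 : 0 < s) (hs : s ≤ w.len) : GWalk E a (w.vtx s) where
  len := s
  len_pos := h0
  vtx := w.vtx
  first := w.first
  last := rfl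
  adj i hi := w.adj i (by omega)

@[simp] lemma take_vtx (w : GWalk E a b) (s : ℕ) (h0 : 0 < s) (hs : s ≤ w.len) (i : ℕ) :
    (w.take s h0 hs).vtx i = w.vtx i := rfl

@[simp] lemma take_len (w : GWalk E a b) (s : ℕ) (h0 : 0 < s) (hs : s ≤ w.len) :
    (w.take s h0 hs).len = s := rfl

lemma take_col (w : GWalk E a b) (s : ℕ) (h0 : 0 < s) (hs : s ≤ w.len) {i : ℕ}
    (hi : i < s) : ((w.take s h0 hs).Col i ↔ w.Col i) := by
  unfold Col
  constructor
  · rintro ⟨a1, a2, a3, a4⟩; exact ⟨a1, by omega, a3, a4⟩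
  · rintro ⟨a1, a2, a3, a4⟩; exact ⟨a1, hi, a3, a4⟩

def drop (w : GWalk E a b) (m : ℕ) (hm : m < w.len) : GWalk E (w.vtx m) b where
  len := w.len - m
  len_pos := by omega
  vtx i := w.vtx (m + i)
  first := by simp
  last := by
    have h : m + (w.len - m) = w.len := by omega
    rw [h, w.last]
  adj i hi := by
    have : m + (i + 1) = m + i + 1 := by omega
    rw [this]
    exact w.adj (m + i) (by omega)

@[simp] lemma drop_vtx (w : GWalk E a b) (m : ℕ) (hm : m < w.len) (i : ℕ) :
    (w.drop m hm).vtx i = w.vtx (m + i) := rfl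

@[simp] lemma drop_len (w : GWalk E a b) (m : ℕ) (hm : m < w.len) :
    (w.drop m hm).len = w.len - m := rfl

lemma drop_col (w : GWalk E a b) (m : ℕ) (hm : m < w.len) {i : ℕ} (h0 : 0 < i) :
    ((w.drop m hm).Col i ↔ w.Col (m + i)) := by
  unfold Col
  simp only [drop_vtx, drop_len]
  have e1 : m + (i - 1) = m + i - 1 := by omega
  have e2 : m + (i + 1) = m + i + 1 := by omega
  rw [e1, e2]
  constructor
  · rintro ⟨a1, a2, a3, a4⟩; exact ⟨by omega, by omega, a3, a4⟩
  · rintro ⟨a1, a2, a3, a4⟩; exact ⟨h0, by omega, a3, a4⟩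

/-- Walk along a directed chain (forward). -/
def ofChainFwd {r : ℕ} (u : ℕ → V) (hr : 0 < r) (h0 : u 0 = a) (hrr : u r = b)
    (hstep : ∀ i, i < r → E (u i) (u (i + 1))) : GWalk E a b where
  len := r
  len_pos := hr
  vtx := u
  first := h0
  last := hrr
  adj i hi := Or.inl (hstep i hi)

lemma ofChainFwd_col {r : ℕ} (u : ℕ → V) (hr : 0 < r) (h0 : u 0 = a) (hrr : u r = b)
    (hstep : ∀ i, i < r → E (u i) (u (i + 1)))
    (hdag : Irreflexive (Relation.TransGen E)) (i : ℕ) :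
    ¬ (ofChainFwd u hr h0 hrr hstep : GWalk E a b).Col i := by
  rintro ⟨a1, a2, a3, a4⟩
  exact no2cyc hdag (hstep i a2) a4

/-- Walk along a directed chain, reversed: chain goes from `c` to `a`,
walk goes from `a` to `c`. -/
def ofChainRev {r : ℕ} (u : ℕ → V) (hr : 0 < r) (h0 : u 0 = c) (hrr : u r = a)
    (hstep : ∀ i, i < r → E (u i) (u (i + 1))) : GWalk E a c where
  len := r
  len_pos := hr
  vtx i := u (r - i)
  first := by rw [Nat.sub_zero, hrr]
  last := by rw [Nat.sub_self, h0]
  adj i hi := by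
    refine Or.inr ?_
    have e : r - (i + 1) + 1 = r - i := by omega
    have := hstep (r - (i + 1)) (by omega)
    rwa [e] at this

lemma ofChainRev_vtx {r : ℕ} (u : ℕ → V) (hr : 0 < r) (h0 : u 0 = c) (hrr : u r = a)
    (hstep : ∀ i, i < r → E (u i) (u (i + 1))) (i : ℕ) :
    (ofChainRev u hr h0 hrr hstep : GWalk E a c).vtx i = u (r - i) := rfl

lemma ofChainRev_col {r : ℕ} (u : ℕ → V) (hr : 0 < r) (h0 : u 0 = c) (hrr : u r = a)
    (hstep : ∀ i, i < r → E (u i) (u (i + 1)))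
    (hdag : Irreflexive (Relation.TransGen E)) (i : ℕ) :
    ¬ (ofChainRev u hr h0 hrr hstep : GWalk E a c).Col i := by
  rintro ⟨a1, a2, a3, a4⟩
  have a2' : i < r := a2
  have e : r - i + 1 = r - (i - 1) := by omega
  have := hstep (r - i) (by omega)
  rw [e] at this
  exact no2cyc hdag this a3

end GWalk

section W2P
variable {E : V → V → Prop}

/-- Loop erasure: an open backdoor walk with interiors avoiding `a` yields an open
backdoor proper path. -/
lemma walk_to_path (hdag : Irreflexive (Relation.TransGen E)) {a b : V} {S : Set V}
    (hab : a ≠ b) :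
    ∀ n (w : GWalk E a b), w.len ≤ n →
    (∀ i, 0 < i → i < w.len → ¬ w.Col i → w.vtx i ∉ S) →
    (∀ i, w.Col i → ∃ d ∈ S, Anc E (w.vtx i) d) →
    E (w.vtx 1) (w.vtx 0) →
    (∀ i, 0 < i → i < w.len → w.vtx i ≠ a) →
    ∃ p : GPath E a b, p.OpenGiven S ∧ p.IsBackdoor ∧ p.ProperFrom {a} := by
  intro n
  induction n with
  | zero => intro w hw; have := w.len_pos; omega
  | succ n IH =>
    intro w hwlen hnc hcol hbd hne
    by_cases hinj : ∀ i j, i ≤ w.len → j ≤ w.len → w.vtx i = w.vtx j → i = j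
    · refine ⟨⟨w.len, w.len_pos, w.vtx, w.first, w.last, hinj, w.adj⟩, ⟨?_, ?_⟩, ?_, ?_⟩
      · exact fun i h1 h2 hc => hnc i h1 h2 hc
      · exact fun i hc => hcol i hc
      · exact hbd
      · intro i h1 h2 hia
        simp only [Set.mem_singleton_iff] at hia
        rcases eq_or_lt_of_le h2 with rfl | h2'
        · exact hab (by rw [← hia, w.last])
        · exact hne i h1 h2' hia
    · push_neg at hinj
      obtain ⟨i0, j0, hi0, hj0, heq0, hne0⟩ := hinj
      -- normalize to s < t
      obtain ⟨s, t, hst, hs_le, ht_le, hveq⟩ :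
          ∃ s t, s < t ∧ s ≤ w.len ∧ t ≤ w.len ∧ w.vtx s = w.vtx t := by
        rcases Nat.lt_or_ge i0 j0 with h | h
        · exact ⟨i0, j0, h, hi0, hj0, heq0⟩
        · exact ⟨j0, i0, by omega, hj0, hi0, heq0.symm⟩
      have hs_pos : 0 < s := by
        rcases Nat.eq_zero_or_pos s with rfl | h
        · exfalso
          have hta : w.vtx t = a := by rw [← hveq, w.first]
          rcases eq_or_lt_of_le ht_le with rfl | h'
          · exact hab (by rw [← hta, w.last])
          · exact hne t hst h' hta
        · exact h
      rcases eq_or_lt_of_le ht_le with rfl | ht_lt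
      · -- t = w.len : truncate
        have hsb : w.vtx s = b := by rw [hveq, w.last]
        set w' : GWalk E a b := (w.take s hs_pos (le_of_lt hst)).copyTarget hsb with hw'
        have hlen' : w'.len = s := rfl
        have hv : ∀ i, w'.vtx i = w.vtx i := fun i => rfl
        have hcoliff : ∀ i, i < s → (w'.Col i ↔ w.Col i) := by
          intro i hi
          rw [GWalk.copyTarget_col, GWalk.take_col _ _ _ _ hi]
        refine IH w' (by omega) ?_ ?_ ?_ ?_
        · intro i h1 h2 hc
          rw [hlen'] at h2
          rw [hv]
          exact hnc i h1 (by omega) (fun hcc => hc ((hcoliff i h2).mpr hcc))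
        · intro i hc
          have h2 : i < s := hc.2.1
          rcases hcol i ((hcoliff i h2).mp hc) with ⟨d, hd, hanc⟩
          exact ⟨d, hd, by rw [hv]; exact hanc⟩
        · exact hbd
        · intro i h1 h2
          rw [hlen'] at h2
          rw [hv]
          exact hne i h1 (by omega)
      · -- t < w.len : cut out the loop
        set w' : GWalk E a b :=
          (w.take s hs_pos (by omega)).append ((w.drop t ht_lt).copySource hveq.symm) with hw'
        have hlen' : w'.len = s + (w.len - t) := rfl
        have hv_le : ∀ i, i ≤ s → w'.vtx i = w.vtx i := by
          intro i hi
          rw [hw', GWalk.append_vtx_le _ _ (by simpa using hi)]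
          rfl
        have hv_ge : ∀ i, s ≤ i → w'.vtx i = w.vtx (t + (i - s)) := by
          intro i hi
          rw [hw', GWalk.append_vtx_ge _ _ (by simpa using hi)]
          rfl
        have hcol_lt : ∀ i, 0 < i → i < s → (w'.Col i ↔ w.Col i) := by
          intro i h1 h2
          rw [hw', GWalk.append_col_left _ _ h1 (by simpa using h2),
            GWalk.take_col _ _ _ _ h2]
        have hcol_gt : ∀ i, s < i → i < s + (w.len - t) → (w'.Col i ↔ w.Col (t + (i - s))) := by
          intro i h1 h2
          rw [hw', GWalk.append_col_right _ _ (by simpa using h1) (by simpa using h2),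
            GWalk.copySource_col]
          exact GWalk.drop_col w t ht_lt (by simp only [GWalk.take_len]; omega)
        have hjunc : w'.Col s ↔ E (w.vtx (s - 1)) (w.vtx s) ∧ E (w.vtx (t + 1)) (w.vtx s) := by
          rw [hw']
          exact GWalk.append_col_junction _ _
        -- key facts about the junction
        have hjunc_col : w'.Col s → ∃ d ∈ S, Anc E (w.vtx s) d := by
          intro hc
          rw [hjunc] at hc
          by_cases hcs : w.Col s
          · exact hcol s hcs
          · have hfwd : E (w.vtx s) (w.vtx (s + 1)) := by
              rcases w.adj s (by omega) with h | h
              · exact h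
              · exact absurd ⟨hs_pos, by omega, hc.1, h⟩ hcs
            have hex : ∃ k, ¬ E (w.vtx (s + k)) (w.vtx (s + k + 1)) := by
              refine ⟨t - s, fun h => ?_⟩
              have e : s + (t - s) = t := by omega
              rw [e] at h
              exact no2cyc hdag h (by rw [← hveq]; exact hc.2)
            set k := Nat.find hex with hk
            have hkspec := Nat.find_spec hex
            rw [← hk] at hkspec
            have hk1 : 1 ≤ k := by
              rcases Nat.eq_zero_or_pos k with h | h
              · exfalso; rw [h] at hkspec; simp only [Nat.add_zero] at hkspec
                exact hkspec hfwd
              · exact h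
            have hkt : k ≤ t - s := by
              by_contra h
              exact Nat.find_min hex (by omega : t - s < k) (by
                intro hfw
                have e : s + (t - s) = t := by omega
                rw [e] at hfw
                exact no2cyc hdag hfw (by rw [← hveq]; exact hc.2))
            have hfor : ∀ q, q < k → E (w.vtx (s + q)) (w.vtx (s + q + 1)) := by
              intro q hq
              by_contra h
              exact Nat.find_min hex hq h
            set mm := s + k with hmm
            have hmm_lt : mm < w.len := by omega
            have hcmm : w.Col mm := by
              refine ⟨by omega, hmm_lt, ?_, ?_⟩
              · have := hfor (k - 1) (by omega)
                have e1 : s + (k - 1) = mm - 1 := by omega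
                have e2 : s + (k - 1) + 1 = mm := by omega
                rwa [e2, e1] at this
              · rcases w.adj mm hmm_lt with h | h
                · exact absurd h hkspec
                · exact h
            rcases hcol mm hcmm with ⟨d, hd, hanc⟩
            refine ⟨d, hd, Relation.ReflTransGen.trans ?_ hanc⟩
            have := chain_anc (u := fun q => w.vtx (s + q)) (r := k) (fun i hi => by
              have e : s + (i + 1) = s + i + 1 := by omega
              rw [e]
              exact hfor i hi) k le_rfl
            simpa [hmm, Anc] using this
        refine IH w' (by omega) ?_ ?_ ?_ ?_
        · -- non-colliders not in S
          intro i h1 h2 hc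
          rw [hlen'] at h2
          rcases Nat.lt_trichotomy i s with h | h | h
          · rw [hv_le i (by omega)]
            exact hnc i h1 (by omega) (fun hcc => hc ((hcol_lt i h1 h).mpr hcc))
          · subst h
            rw [hv_le i le_rfl]
            intro hin
            apply hc
            rw [hjunc]
            have hcs : w.Col i := by
              by_contra hncs
              exact hnc i h1 (by omega) hncs hin
            have hct : w.Col t := by
              by_contra hnct
              exact hnc t (by omega) ht_lt hnct (by rw [← hveq]; exact hin)
            exact ⟨hcs.2.2.1, by rw [hveq]; exact hct.2.2.2⟩
          · rw [hv_ge i (by omega)]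
            exact hnc _ (by omega) (by omega) (fun hcc => hc ((hcol_gt i h h2).mpr hcc))
        · -- colliders have descendants in S
          intro i hc
          have h1 : 0 < i := hc.1
          have h2 : i < s + (w.len - t) := hc.2.1
          rcases Nat.lt_trichotomy i s with h | h | h
          · rcases hcol i ((hcol_lt i h1 h).mp hc) with ⟨d, hd, ha⟩
            exact ⟨d, hd, by rw [hv_le i (by omega)]; exact ha⟩
          · subst h
            rcases hjunc_col hc with ⟨d, hd, ha⟩
            exact ⟨d, hd, by rw [hv_le i le_rfl]; exact ha⟩
          · rcases hcol _ ((hcol_gt i h h2).mp hc) with ⟨d, hd, ha⟩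
            exact ⟨d, hd, by rw [hv_ge i (by omega)]; exact ha⟩
        · have e0 : w'.vtx 0 = w.vtx 0 := hv_le 0 (by omega)
          have e1 : w'.vtx 1 = w.vtx 1 := hv_le 1 (by omega)
          rw [e0, e1]
          exact hbd
        · intro i h1 h2
          rw [hlen'] at h2
          rcases le_or_gt i s with h | h
          · rw [hv_le i h]
            exact hne i h1 (by omega)
          · rw [hv_ge i (by omega)]
            exact hne _ (by omega) (by omega)

end W2P

section Surgery
variable {E : V → V → Prop}

/-- Invariant for walks during collider surgery. -/
def WInv (E : V → V → Prop) (T : Set V) (xj y : V) (w : GWalk E xj y) : Prop :=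
  E (w.vtx 1) (w.vtx 0) ∧
  (∀ i, 0 < i → i < w.len → w.vtx i ≠ xj) ∧
  (∀ i, 0 < i → i < w.len → ¬ w.Col i → w.vtx i ∉ T) ∧
  (∀ i, w.Col i → (∃ d ∈ T, Anc E (w.vtx i) d) ∨ Anc E (w.vtx i) y)

/-- Colliders with no descendant in `T`. -/
def badSet (T : Set V) {xj y : V} (w : GWalk E xj y) : Set ℕ :=
  {i | w.Col i ∧ ¬ ∃ d ∈ T, Anc E (w.vtx i) d}

lemma badSet_finite (T : Set V) {xj y : V} (w : GWalk E xj y) : (badSet T w).Finite :=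
  (Set.finite_Iio w.len).subset (fun i hi => hi.1.2.1)

lemma reduce (hdag : Irreflexive (Relation.TransGen E)) (T : Set V) (xj y : V) :
    ∀ n (w : GWalk E xj y), WInv E T xj y w → (badSet T w).ncard ≤ n →
      ∃ w' : GWalk E xj y, WInv E T xj y w' ∧ badSet T w' = ∅ := by
  intro n
  induction n with
  | zero =>
    intro w hInv hcard
    exact ⟨w, hInv, (Set.ncard_eq_zero (badSet_finite T w)).mp (by omega)⟩
  | succ n IH =>
    intro w hInv hcard
    by_cases hbe : badSet T w = ∅
    · exact ⟨w, hInv, hbe⟩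
    · have hne : (badSet T w).Nonempty := Set.nonempty_iff_ne_empty.mpr hbe
      have hfin := badSet_finite T w
      have hne' : hfin.toFinset.Nonempty := by rwa [Set.Finite.toFinset_nonempty]
      set m := hfin.toFinset.max' hne' with hmdef
      have hm : m ∈ badSet T w := hfin.mem_toFinset.mp (hfin.toFinset.max'_mem hne')
      have hmax : ∀ i ∈ badSet T w, i ≤ m := fun i hi =>
        hfin.toFinset.le_max' i (hfin.mem_toFinset.mpr hi)
      obtain ⟨hcolm, hnbad⟩ := hm
      have hm_pos : 0 < m := hcolm.1
      have hm_lt : m < w.len := hcolm.2.1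
      have hAncY : Anc E (w.vtx m) y := by
        rcases hInv.2.2.2 m hcolm with h | h
        · exact absurd h hnbad
        · exact h
      have hcm_ne : w.vtx m ≠ xj := hInv.2.1 m hm_pos hm_lt
      have hnoT : ∀ v, Anc E (w.vtx m) v → v ∉ T := by
        intro v ha hv
        exact hnbad ⟨v, hv, ha⟩
      by_cases hax : Anc E (w.vtx m) xj
      · -- Branch 2 : reroute through a directed chain to xj; done outright.
        obtain ⟨r, u, hu0, hur, hstep⟩ := anc_chain hax
        have hexj : ∃ q, u q = xj := ⟨r, hur⟩
        set t' := Nat.find hexj with ht'def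
        have ht' : u t' = xj := Nat.find_spec hexj
        have ht'min : ∀ q, q < t' → u q ≠ xj := fun q hq => Nat.find_min hexj hq
        have ht'r : t' ≤ r := Nat.find_min' hexj hur
        have ht'pos : 0 < t' := by
          rcases Nat.eq_zero_or_pos t' with h | h
          · exact absurd (h ▸ ht') (hu0 ▸ hcm_ne)
          · exact h
        have hstep' : ∀ i, i < t' → E (u i) (u (i + 1)) := fun i hi => hstep i (by omega)
        have huanc : ∀ q, q ≤ t' → Anc E (w.vtx m) (u q) := by
          intro q hq
          have := chain_anc hstep' q hq
          rwa [hu0] at this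
        set w' : GWalk E xj y :=
          (GWalk.ofChainRev u ht'pos hu0 ht' hstep').append (w.drop m hm_lt) with hw'
        have hlen' : w'.len = t' + (w.len - m) := rfl
        have hv_le : ∀ i, i ≤ t' → w'.vtx i = u (t' - i) := by
          intro i hi
          rw [hw', GWalk.append_vtx_le _ _ (by exact hi)]
          rfl
        have hv_ge : ∀ i, t' ≤ i → w'.vtx i = w.vtx (m + (i - t')) := by
          intro i hi
          rw [hw', GWalk.append_vtx_ge _ _ (by exact hi)]
          rfl
        have hcol_lt : ∀ i, 0 < i → i < t' → ¬ w'.Col i := by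
          intro i h1 h2 hc
          rw [hw', GWalk.append_col_left _ _ h1 (by exact h2)] at hc
          exact GWalk.ofChainRev_col u ht'pos hu0 ht' hstep' hdag i hc
        have hcol_eq : ¬ w'.Col t' := by
          intro hc
          rw [hw'] at hc
          have := (GWalk.append_col_junction _ _).mp hc
          have h2 : E ((GWalk.ofChainRev u ht'pos hu0 ht' hstep' :
              GWalk E xj (w.vtx m)).vtx (t' - 1)) (w.vtx m) := this.1
          rw [GWalk.ofChainRev_vtx] at h2
          have e : t' - (t' - 1) = 1 := by omega
          rw [e] at h2
          have h3 := hstep' 0 ht'pos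
          rw [hu0] at h3
          exact no2cyc hdag h3 h2
        have hcol_gt : ∀ i, t' < i → i < t' + (w.len - m) → (w'.Col i ↔ w.Col (m + (i - t'))) := by
          intro i h1 h2
          rw [hw', GWalk.append_col_right _ _ (by exact h1) (by exact h2)]
          exact GWalk.drop_col w m hm_lt (by simp only [GWalk.ofChainRev]; omega)
        refine ⟨w', ⟨?_, ?_, ?_, ?_⟩, ?_⟩
        · -- backdoor
          rw [hv_le 1 ht'pos, hv_le 0 (by omega), Nat.sub_zero, ht']
          have := hstep' (t' - 1) (by omega)
          have e : t' - 1 + 1 = t' := by omega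
          rw [e, ht'] at this
          exact this
        · -- interiors avoid xj
          intro i h1 h2
          rw [hlen'] at h2
          rcases Nat.lt_trichotomy i t' with h | h | h
          · rw [hv_le i (by omega)]
            exact ht'min (t' - i) (by omega)
          · subst h
            rw [hv_le t' le_rfl, Nat.sub_self, hu0]
            exact hcm_ne
          · rw [hv_ge i (by omega)]
            exact hInv.2.1 _ (by omega) (by omega)
        · -- non-colliders avoid T
          intro i h1 h2 hc
          rw [hlen'] at h2
          rcases Nat.lt_trichotomy i t' with h | h | h
          · rw [hv_le i (by omega)]
            exact hnoT _ (huanc (t' - i) (by omega))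
          · subst h
            rw [hv_le t' le_rfl, Nat.sub_self, hu0]
            exact hnoT _ Relation.ReflTransGen.refl
          · rw [hv_ge i (by omega)]
            have hq2 : m + (i - t') < w.len := by omega
            by_cases hcq : w.Col (m + (i - t'))
            · exact absurd ((hcol_gt i h h2).mpr hcq) hc
            · exact hInv.2.2.1 _ (by omega) hq2 hcq
        · -- colliders have descendants in T (or anc y)
          intro i hc
          have h1 : 0 < i := hc.1
          have h2 : i < t' + (w.len - m) := hc.2.1
          rcases Nat.lt_trichotomy i t' with h | h | h
          · exact absurd hc (hcol_lt i h1 h)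
          · exact absurd (h ▸ hc) hcol_eq
          · have hcq := (hcol_gt i h h2).mp hc
            have hqbad : m + (i - t') ∉ badSet T w := by
              intro hbad
              have := hmax _ hbad
              omega
            have hdesc : ∃ d ∈ T, Anc E (w.vtx (m + (i - t'))) d := by
              by_contra hno
              exact hqbad ⟨hcq, hno⟩
            rw [hv_ge i (by omega)]
            exact Or.inl hdesc
        · -- no bad colliders remain
          rw [Set.eq_empty_iff_forall_notMem]
          rintro i ⟨hc, hnod⟩
          have h1 : 0 < i := hc.1
          have h2 : i < t' + (w.len - m) := hc.2.1
          rcases Nat.lt_trichotomy i t' with h | h | h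
          · exact hcol_lt i h1 h hc
          · exact hcol_eq (h ▸ hc)
          · have hcq := (hcol_gt i h h2).mp hc
            have hqbad : m + (i - t') ∉ badSet T w := by
              intro hbad
              have := hmax _ hbad
              omega
            have hdesc : ∃ d ∈ T, Anc E (w.vtx (m + (i - t'))) d := by
              by_contra hno
              exact hqbad ⟨hcq, hno⟩
            rw [hv_ge i (by omega)] at hnod
            exact hnod hdesc
      · -- Branch 1 : reroute through a directed chain to y; strictly fewer bad colliders.
        obtain ⟨r, u, hu0, hur, hstep⟩ := anc_chain hAncY
        have huanc : ∀ q, q ≤ r → Anc E (w.vtx m) (u q) := by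
          intro q hq
          have := chain_anc hstep q hq
          rwa [hu0] at this
        have hunx : ∀ q, q ≤ r → u q ≠ xj := by
          intro q hq he
          exact hax (he ▸ huanc q hq)
        rcases Nat.eq_zero_or_pos r with hr0 | hrpos
        · -- chain is trivial : w.vtx m = y, truncate the walk at m
          have hcy : w.vtx m = y := by
            rw [hr0] at hur
            rw [← hu0]; exact hur
          set w' : GWalk E xj y := (w.take m hm_pos (by omega)).copyTarget hcy with hw'
          have hlen' : w'.len = m := rfl
          have hv : ∀ i, w'.vtx i = w.vtx i := fun i => rfl
          have hcoliff : ∀ i, i < m → (w'.Col i ↔ w.Col i) := by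
            intro i hi
            rw [hw', GWalk.copyTarget_col, GWalk.take_col _ _ _ _ hi]
          have hsub : badSet T w' ⊆ badSet T w := by
            rintro i ⟨hc, hnod⟩
            have h2 : i < m := hc.2.1
            exact ⟨(hcoliff i h2).mp hc, by rw [hv] at hnod; exact hnod⟩
          have hss : badSet T w' ⊂ badSet T w := by
            refine (Set.ssubset_iff_of_subset hsub).mpr ⟨m, ⟨hcolm, hnbad⟩, ?_⟩
            rintro ⟨hc, -⟩
            have : m < m := hc.2.1
            omega
          refine IH w' ⟨?_, ?_, ?_, ?_⟩ ?_
          · exact hInv.1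
          · intro i h1 h2
            rw [hlen'] at h2
            exact hInv.2.1 i h1 (by omega)
          · intro i h1 h2 hc
            rw [hlen'] at h2
            rw [hv]
            exact hInv.2.2.1 i h1 (by omega) (fun hcc => hc ((hcoliff i h2).mpr hcc))
          · intro i hc
            have h2 : i < m := hc.2.1
            rcases hInv.2.2.2 i ((hcoliff i h2).mp hc) with h | h
            · exact Or.inl h
            · exact Or.inr h
          · have := Set.ncard_lt_ncard hss hfin
            omega
        · -- non-trivial chain : splice it after position m
          set w' : GWalk E xj y :=
            (w.take m hm_pos (by omega)).append (GWalk.ofChainFwd u hrpos hu0 hur hstep)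
            with hw'
          have hlen' : w'.len = m + r := rfl
          have hv_le : ∀ i, i ≤ m → w'.vtx i = w.vtx i := by
            intro i hi
            rw [hw', GWalk.append_vtx_le _ _ (by simpa using hi)]
            rfl
          have hv_ge : ∀ i, m ≤ i → w'.vtx i = u (i - m) := by
            intro i hi
            rw [hw', GWalk.append_vtx_ge _ _ (by simpa using hi)]
            rfl
          have hcol_lt : ∀ i, 0 < i → i < m → (w'.Col i ↔ w.Col i) := by
            intro i h1 h2
            rw [hw', GWalk.append_col_left _ _ h1 (by simpa using h2),
              GWalk.take_col _ _ _ _ h2]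
          have hcol_eq : ¬ w'.Col m := by
            intro hc
            rw [hw'] at hc
            have := (GWalk.append_col_junction _ _).mp hc
            have h2 : E ((GWalk.ofChainFwd u hrpos hu0 hur hstep : GWalk E (w.vtx m) y).vtx 1)
                (w.vtx m) := this.2
            have h3 := hstep 0 hrpos
            rw [hu0] at h3
            exact no2cyc hdag h3 h2
          have hcol_gt : ∀ i, m < i → i < m + r → ¬ w'.Col i := by
            intro i h1 h2 hc
            rw [hw', GWalk.append_col_right _ _ (by simpa using h1) (by exact h2)] at hc
            exact GWalk.ofChainFwd_col u hrpos hu0 hur hstep hdag _ hc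
          have hsub : badSet T w' ⊆ badSet T w := by
            rintro i ⟨hc, hnod⟩
            have h1 : 0 < i := hc.1
            have h2 : i < m + r := hc.2.1
            rcases Nat.lt_trichotomy i m with h | h | h
            · exact ⟨(hcol_lt i h1 h).mp hc, by rw [hv_le i (by omega)] at hnod; exact hnod⟩
            · exact absurd (h ▸ hc) hcol_eq
            · exact absurd hc (hcol_gt i h h2)
          have hss : badSet T w' ⊂ badSet T w := by
            refine (Set.ssubset_iff_of_subset hsub).mpr ⟨m, ⟨hcolm, hnbad⟩, ?_⟩
            rintro ⟨hc, -⟩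
            exact hcol_eq hc
          refine IH w' ⟨?_, ?_, ?_, ?_⟩ ?_
          · rw [hv_le 1 (by omega), hv_le 0 (by omega)]
            exact hInv.1
          · intro i h1 h2
            rw [hlen'] at h2
            rcases le_or_gt i m with h | h
            · rw [hv_le i h]
              exact hInv.2.1 i h1 (by omega)
            · rw [hv_ge i (by omega)]
              exact hunx _ (by omega)
          · intro i h1 h2 hc
            rw [hlen'] at h2
            rcases Nat.lt_trichotomy i m with h | h | h
            · rw [hv_le i (by omega)]
              exact hInv.2.2.1 i h1 (by omega) (fun hcc => hc ((hcol_lt i h1 h).mpr hcc))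
            · subst h
              rw [hv_le m le_rfl]
              exact hnoT _ Relation.ReflTransGen.refl
            · rw [hv_ge i (by omega)]
              exact hnoT _ (huanc _ (by omega))
          · intro i hc
            have h1 : 0 < i := hc.1
            have h2 : i < m + r := hc.2.1
            rcases Nat.lt_trichotomy i m with h | h | h
            · rcases hInv.2.2.2 i ((hcol_lt i h1 h).mp hc) with hd | hd
              · exact Or.inl (by rw [hv_le i (by omega)]; exact hd)
              · exact Or.inr (by rw [hv_le i (by omega)]; exact hd)
            · exact absurd (h ▸ hc) hcol_eq
            · exact absurd hc (hcol_gt i h h2)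
          · have := Set.ncard_lt_ncard hss hfin
            omega

/-- Master lemma: if every proper non-causal path from `xj` to `y` is blocked given `T`,
`T ⊆ S` and every element of `S` is an ancestor of `y`, then every backdoor path from
`xj` to `y` is blocked given `S`. -/
lemma no_open_backdoor (hdag : Irreflexive (Relation.TransGen E)) {xj y : V} {T S : Set V}
    (hxy : xj ≠ y) (hTS : T ⊆ S)
    (hSanc : ∀ s ∈ S, Anc E s y)
    (hblock : ∀ p : GPath E xj y, p.ProperFrom {xj} → ¬ p.Causal → ¬ p.OpenGiven T)
    (p : GPath E xj y) (hbd : p.IsBackdoor) : ¬ p.OpenGiven S := by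
  intro hopen
  set w0 : GWalk E xj y := ⟨p.len, p.len_pos, p.vtx, p.first, p.last, p.adj⟩ with hw0
  have hcoliff : ∀ i, w0.Col i ↔ p.IsColliderAt i := fun i => Iff.rfl
  have hInv0 : WInv E T xj y w0 := by
    refine ⟨hbd, ?_, ?_, ?_⟩
    · intro i h1 h2 he
      have := p.inj i 0 (le_of_lt h2) (Nat.zero_le _) (by rw [p.first]; exact he)
      omega
    · intro i h1 h2 hc
      exact fun hin => hopen.1 i h1 h2 ((hcoliff i).not.mp hc) (hTS hin)
    · intro i hc
      rcases hopen.2 i ((hcoliff i).mp hc) with ⟨d, hd, ha⟩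
      exact Or.inr (Relation.ReflTransGen.trans ha (hSanc d hd))
  obtain ⟨w', hInv', hbad'⟩ := reduce hdag T xj y ((badSet T w0).ncard) w0 hInv0 le_rfl
  obtain ⟨q, hqopen, hqbd, hqproper⟩ :=
    walk_to_path hdag hxy w'.len w' le_rfl hInv'.2.2.1
      (fun i hc => by
        rcases hInv'.2.2.2 i hc with h | h
        · exact h
        · by_contra hno
          exact (Set.eq_empty_iff_forall_notMem.mp hbad' i) ⟨hc, hno⟩)
      hInv'.1 hInv'.2.1
  have hqnc : ¬ q.Causal := by
    intro hc
    exact no2cyc hdag (hc 0 q.len_pos) hqbd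
  exact hblock q hqproper hqnc hqopen

end Surgery

/-- **R1 Combine (graphical version).** With treatments `X i`, witnesses `Wf i` and
sets `T i ⊆ (W \ range Wf) ∪ (range X \ De(X i))` satisfying the
d-connection/d-separation conditions, and minimal sets `Zf i ⊆ T i` satisfying the
adjustment criterion relative to `({X i}, {Y})`, every `X i` has a directed path to `Y`
with at least one edge and `(⋃ i, Zf i) \ range X` satisfies the back-door criterion
relative to `(range X, {Y})`. -/
theorem stmt_8 [Fintype V] (E : V → V → Prop)
    (hdag : Irreflexive (Relation.TransGen E))
    (k : ℕ) (X : Fin (k + 1) → V) (hXinj : Function.Injective X)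
    (Y : V) (W : Set V)
    (hXY : ∀ i, X i ≠ Y) (hXW : ∀ i, X i ∉ W) (hYW : Y ∉ W)
    (hordWX : ∀ i, ∀ w ∈ W, ¬ Anc E (X i) w)
    (hordWY : ∀ w ∈ W, ¬ Anc E Y w)
    (hordXY : ∀ i, ¬ Anc E Y (X i))
    (Wf : Fin (k + 1) → V) (hWf : ∀ i, Wf i ∈ W)
    (T : Fin (k + 1) → Set V)
    (hT : ∀ i, T i ⊆ (W \ Set.range Wf) ∪ (Set.range X \ descendants E {X i}))
    (hconn : ∀ i, ∃ p : GPath E (Wf i) Y, p.OpenGiven (T i))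
    (hsep : ∀ i, ∀ p : GPath E (Wf i) Y, ¬ p.OpenGiven (T i ∪ {X i}))
    (Zf : Fin (k + 1) → Set V) (hZfT : ∀ i, Zf i ⊆ T i)
    (hZfadj : ∀ i, AdjustmentCriterion E {X i} {Y} (Zf i))
    (hZfmin : ∀ i, ∀ Z', Z' ⊂ Zf i → ¬ AdjustmentCriterion E {X i} {Y} Z') :
    (∀ i, Relation.TransGen E (X i) Y) ∧
      BackdoorCriterion E (Set.range X) {Y} ((⋃ i, Zf i) \ Set.range X) := by
  classical
  have hanoT : ∀ i, ∀ s ∈ T i, ¬ Anc E (X i) s := by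
    intro i s hs hanc
    rcases hT i hs with ⟨hsW, _⟩ | ⟨_, hsD⟩
    · exact hordWX i s hsW hanc
    · exact hsD ⟨X i, rfl, hanc⟩
  have part1 : ∀ i, Relation.TransGen E (X i) Y := by
    intro i
    obtain ⟨p, hopen⟩ := hconn i
    have hB : ∀ j, p.IsColliderAt j → ∃ d ∈ T i ∪ {X i}, Anc E (p.vtx j) d := by
      intro j hc
      rcases hopen.2 j hc with ⟨d, hd, ha⟩
      exact ⟨d, Or.inl hd, ha⟩
    have hnA : ¬ ∀ j, 0 < j → j < p.len → ¬ p.IsColliderAt j → p.vtx j ∉ T i ∪ {X i} := by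
      intro hA
      exact hsep i p ⟨hA, hB⟩
    push_neg at hnA
    obtain ⟨j, hj1, hj2, hjnc, hjmem⟩ := hnA
    have hjx : p.vtx j = X i := by
      rcases hjmem with h | h
      · exact absurd h (hopen.1 j hj1 hj2 hjnc)
      · exact h
    rcases p.adj j hj2 with he | he
    · rcases sweep_forward p hopen.2 (p.len - j) j le_rfl hj2 he with h | ⟨s, hs, h⟩
      · rwa [hjx] at h
      · rw [hjx] at h
        exact absurd h.to_reflTransGen (hanoT i s hs)
    · have hj1' : j - 1 + 1 = j := by omega
      rcases p.adj (j - 1) (by omega) with he2 | he2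
      · rw [hj1'] at he2
        exact absurd ⟨hj1, hj2, he2, he⟩ hjnc
      · rw [hj1'] at he2
        have hsb := sweep_backward p hopen.2 (j - 1) (by omega) (by rw [hj1']; exact he2)
        rw [hj1'] at hsb
        rcases hsb with h | ⟨s, hs, h⟩
        · rw [hjx] at h
          exact absurd h.to_reflTransGen (hordWX i (Wf i) (hWf i))
        · rw [hjx] at h
          exact absurd h.to_reflTransGen (hanoT i s hs)
  have hZfanc : ∀ i, ∀ z ∈ Zf i, Anc E z Y := by
    intro i
    set Z' := Zf i ∩ {v | Anc E v (X i) ∨ Anc E v Y} with hZ'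
    have hAC' : AdjustmentCriterion E {X i} {Y} Z' := by
      constructor
      · intro w hw hex z hz
        exact (hZfadj i).1 w hw hex z hz.1
      · intro x hx y hy p hproper hncausal hopen'
        have hx' : x = X i := hx
        have hy' : Y = y := Eq.symm hy
        subst hx'
        subst hy'
        have hall : ∀ j, j ≤ p.len → Anc E (p.vtx j) (X i) ∨ Anc E (p.vtx j) Y := by
          intro j hj
          rcases vertex_anc p hopen'.2 j hj with h | h | ⟨s, hs, h⟩
          · exact Or.inl h
          · exact Or.inr h
          · rcases hs.2 with h2 | h2
            · exact Or.inl (h.trans h2)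
            · exact Or.inr (h.trans h2)
        have hopenZ : p.OpenGiven (Zf i) := by
          constructor
          · intro j h1 h2 hc hin
            exact hopen'.1 j h1 h2 hc ⟨hin, hall j (le_of_lt h2)⟩
          · intro j hc
            rcases hopen'.2 j hc with ⟨d, hd, ha⟩
            exact ⟨d, hd.1, ha⟩
        exact (hZfadj i).2 (X i) rfl Y rfl p hproper hncausal hopenZ
    have hsub : Z' ⊆ Zf i := Set.inter_subset_left
    have heq : Z' = Zf i := by
      by_contra hne
      exact hZfmin i Z' ((Set.ssubset_iff_subset_ne).mpr ⟨hsub, hne⟩) hAC'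
    intro z hz
    have hz' : z ∈ Z' := heq ▸ hz
    rcases hz'.2 with h | h
    · exact h.trans (part1 i).to_reflTransGen
    · exact h
  refine ⟨part1, ?_, ?_⟩
  · rw [Set.eq_empty_iff_forall_notMem]
    rintro v ⟨⟨hvU, hvX⟩, hvD⟩
    rcases Set.mem_iUnion.mp hvU with ⟨i, hvi⟩
    rcases hT i (hZfT i hvi) with ⟨hW, _⟩ | ⟨hX', _⟩
    · rcases hvD with ⟨s, ⟨mIdx, rfl⟩, hanc⟩
      exact hordWX mIdx v hW hanc
    · exact hvX hX'
  · rintro x ⟨j, rfl⟩ y hy p hbd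
    have hy' : Y = y := Eq.symm hy
    subst hy'
    have hTS : Zf j ⊆ ((⋃ i, Zf i) \ Set.range X) ∪ (Set.range X \ {X j}) := by
      intro z hz
      by_cases hzx : z ∈ Set.range X
      · refine Or.inr ⟨hzx, ?_⟩
        intro hzj
        have hzj' : z = X j := hzj
        rcases hT j (hZfT j hz) with ⟨hW, _⟩ | ⟨_, hnd⟩
        · rcases hzx with ⟨m, rfl⟩
          exact hXW m hW
        · exact hnd ⟨X j, rfl, hzj' ▸ Relation.ReflTransGen.refl⟩
      · exact Or.inl ⟨Set.mem_iUnion.mpr ⟨j, hz⟩, hzx⟩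
    have hSanc : ∀ s ∈ ((⋃ i, Zf i) \ Set.range X) ∪ (Set.range X \ {X j}), Anc E s Y := by
      rintro s (⟨hsU, -⟩ | ⟨⟨m, rfl⟩, -⟩)
      · rcases Set.mem_iUnion.mp hsU with ⟨i, hsi⟩
        exact hZfanc i s hsi
      · exact (part1 m).to_reflTransGen
    have hblock : ∀ q : GPath E (X j) Y, q.ProperFrom {X j} → ¬ q.Causal →
        ¬ q.OpenGiven (Zf j) := fun q hp hc => (hZfadj j).2 (X j) rfl Y rfl q hp hc
    exact no_open_backdoor hdag (hXY j) hTS hSanc hblock p hbd
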